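/- Let q be an odd prime power with q ≡ 1 (mod 4) and let F be an intersecting subset of PGL(2,F_q) with respect to the induced action on 3-element subsets of ℙ¹(F_q). Then F is contained in a single coset of PSL(2,F_q); that is, for all g, h ∈ F one has g·h⁻¹ ∈ PSL(2,F_q). -/

import Mathlib

open scoped Pointwise MatrixGroups

noncomputable section

/-- The projective line over `K`. -/
abbrev Proj (K : Type*) [Field K] := Projectivization K (Fin 2 → K)

variable {K : Type*} [Field K]

lemma GLmulVecLin_injective (g : GL (Fin 2) K) :
    Function.Injective ((g : Matrix (Fin 2) (Fin 2) K).mulVecLin) := by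
  intro u v huv
  have h := congrArg ((((g⁻¹ : GL (Fin 2) K) : Matrix (Fin 2) (Fin 2) K)).mulVecLin) huv
  simp only [Matrix.mulVecLin_apply, Matrix.mulVec_mulVec] at h
  rw [show ((g⁻¹ : GL (Fin 2) K) : Matrix (Fin 2) (Fin 2) K) * (g : Matrix (Fin 2) (Fin 2) K) = 1
    from g.inv_mul, Matrix.one_mulVec, Matrix.one_mulVec] at h
  exact h

lemma GLmulVec_ne_zero (g : GL (Fin 2) K) {v : Fin 2 → K} (hv : v ≠ 0) :
    (g : Matrix (Fin 2) (Fin 2) K).mulVec v ≠ 0 := by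
  intro h
  apply hv
  have : ((g : Matrix (Fin 2) (Fin 2) K)).mulVecLin v =
      ((g : Matrix (Fin 2) (Fin 2) K)).mulVecLin 0 := by
    simpa [Matrix.mulVecLin_apply] using h
  simpa using GLmulVecLin_injective g this

/-- The action of `GL(2,K)` on the projective line by matrix-vector multiplication on
representatives. -/
instance GLProjAction : MulAction (GL (Fin 2) K) (Proj K) where
  smul g x := Projectivization.map ((g : Matrix (Fin 2) (Fin 2) K).mulVecLin)
    (GLmulVecLin_injective g) x
  one_smul x := by
    induction x using Projectivization.ind with
    | h v hv =>
      show Projectivization.map _ _ _ = _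
      simp [Projectivization.map_mk]
  mul_smul g h x := by
    induction x using Projectivization.ind with
    | h v hv =>
      show Projectivization.map _ _ _ =
        Projectivization.map _ _ (Projectivization.map _ _ _)
      simp [Projectivization.map_mk, Matrix.mulVecLin_apply, Matrix.mulVec_mulVec,
        Units.val_mul]

lemma GL_smul_mk (g : GL (Fin 2) K) (v : Fin 2 → K) (hv : v ≠ 0) :
    g • Projectivization.mk K v hv =
      Projectivization.mk K ((g : Matrix (Fin 2) (Fin 2) K).mulVec v)
        (GLmulVec_ne_zero g hv) := by
  show Projectivization.map _ _ _ = _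
  simp [Projectivization.map_mk, Matrix.mulVecLin_apply]

/-- The action of `SL(2,K)` on the projective line. -/
instance SLProjAction : MulAction (Matrix.SpecialLinearGroup (Fin 2) K) (Proj K) :=
  MulAction.compHom _ (Matrix.SpecialLinearGroup.toGL)

end

noncomputable section
variable {K : Type*} [Field K]

lemma center_smul_eq (c : GL (Fin 2) K) (hc : c ∈ Subgroup.center (GL (Fin 2) K))
    (x : Proj K) : c • x = x := by
  have hcomm : ∀ t : Matrix.TransvectionStruct (Fin 2) K,
      Commute t.toMatrix (c : Matrix (Fin 2) (Fin 2) K) := by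
    intro t
    let u : GL (Fin 2) K := ⟨t.toMatrix, t.inv.toMatrix, t.mul_inv, t.inv_mul⟩
    have h := Subgroup.mem_center_iff.mp hc u
    have := congrArg Units.val h
    simpa [u, Commute, SemiconjBy] using this
  obtain ⟨r, hr⟩ := Matrix.mem_range_scalar_of_commute_transvectionStruct hcomm
  have hr0 : r ≠ 0 := by
    intro h0
    have hne : (![1, 0] : Fin 2 → K) ≠ 0 := by
      intro h
      have := congrFun h 0
      simp at this
    have := GLmulVec_ne_zero c hne
    rw [← hr, h0] at this
    rw [show (0 : K) = (0 : K) from rfl] at this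
    apply this
    funext i
    simp [Matrix.mulVec_diagonal]
  induction x using Projectivization.ind with
  | h v hv =>
    rw [GL_smul_mk]
    rw [Projectivization.mk_eq_mk_iff]
    refine ⟨Units.mk0 r hr0, ?_⟩
    rw [← hr]
    funext i
    simp [Matrix.mulVec_diagonal]

end

noncomputable section

/-- The projective general linear group `PGL(2,K) = GL(2,K)/Z(GL(2,K))`. -/
abbrev PGL2 (K : Type*) [Field K] : Type _ :=
  GL (Fin 2) K ⧸ Subgroup.center (GL (Fin 2) K)

variable {K : Type*} [Field K]

/-- The action of `GL(2,K)` on the projective line descends to `PGL(2,K)`. -/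
instance PGLProjSMul : SMul (PGL2 K) (Proj K) :=
  ⟨fun g x => Quotient.liftOn' g (fun a => a • x) (by
    intro a b hab
    rw [QuotientGroup.leftRel_apply] at hab
    show a • x = b • x
    have hb : b = a * (a⁻¹ * b) := by group
    rw [hb, mul_smul, center_smul_eq _ hab])⟩

instance PGLProjAction : MulAction (PGL2 K) (Proj K) where
  one_smul x := center_smul_eq 1 (Subgroup.one_mem _) x
  mul_smul g h x := by
    induction g using Quotient.inductionOn' with
    | h a =>
      induction h using Quotient.inductionOn' with
      | h b => exact mul_smul a b x

lemma PGL2_smul_mk' (a : GL (Fin 2) K) (x : Proj K) :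
    (QuotientGroup.mk a : PGL2 K) • x = a • x := rfl

/-- The natural homomorphism `SL(2,K) → PGL(2,K)`. -/
def SLtoPGL2 (K : Type*) [Field K] : Matrix.SpecialLinearGroup (Fin 2) K →* PGL2 K :=
  (QuotientGroup.mk' (Subgroup.center (GL (Fin 2) K))).comp Matrix.SpecialLinearGroup.toGL

/-- `PSL(2,K)`, realized as the image of `SL(2,K)` in `PGL(2,K)`. -/
def PSL2 (K : Type*) [Field K] : Subgroup (PGL2 K) := (SLtoPGL2 K).range

/-- A subset `F` of a group `G` acting on the projective line over `K` is *intersecting for the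
action on `k`-element subsets* if any two of its elements agree on some `k`-element subset of
the projective line. -/
def IntersectingOnSubsets (G : Type*) [Group G] (K : Type*) [Field K]
    [MulAction G (Proj K)] (k : ℕ) (F : Set G) : Prop :=
  ∀ g ∈ F, ∀ h ∈ F, ∃ S : Set (Proj K), S.ncard = k ∧ g • S = h • S

end

noncomputable section AuxProof
variable {K : Type*} [Field K]

lemma linIndep_of_mk_ne {v w : Fin 2 → K} (hv : v ≠ 0) (hw : w ≠ 0)
    (h : Projectivization.mk K v hv ≠ Projectivization.mk K w hw) :
    LinearIndependent K ![v, w] := by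
  rw [LinearIndependent.pair_iff' hv]
  intro a ha
  exact h ((Projectivization.mk_eq_mk_iff' K w v hw hv).mpr ⟨a, ha⟩).symm

lemma exists_unit_of_smul_fix (A : GL (Fin 2) K) {v : Fin 2 → K} (hv : v ≠ 0)
    (h : A • Projectivization.mk K v hv = Projectivization.mk K v hv) :
    ∃ a : Kˣ, (A : Matrix (Fin 2) (Fin 2) K).mulVec v = (a : K) • v := by
  rw [GL_smul_mk] at h
  obtain ⟨a, ha⟩ := (Projectivization.mk_eq_mk_iff K _ _ _ _).mp h
  exact ⟨a, by rw [← ha]; rfl⟩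

lemma scalar_of_fix3 (A : GL (Fin 2) K) {x y z : Proj K}
    (hxy : x ≠ y) (hxz : x ≠ z) (hyz : y ≠ z)
    (hx : A • x = x) (hy : A • y = y) (hz : A • z = z) :
    ∃ s : Kˣ, (A : Matrix (Fin 2) (Fin 2) K) = (s : K) • 1 := by
  induction x using Projectivization.ind with | h v hv =>
  induction y using Projectivization.ind with | h w hw =>
  induction z using Projectivization.ind with | h t ht =>
  obtain ⟨a, ha⟩ := exists_unit_of_smul_fix A hv hx
  obtain ⟨b, hb⟩ := exists_unit_of_smul_fix A hw hy
  obtain ⟨c, hc⟩ := exists_unit_of_smul_fix A ht hz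
  have hli : LinearIndependent K ![v, w] := linIndep_of_mk_ne hv hw hxy
  have hcard : Fintype.card (Fin 2) = Module.finrank K (Fin 2 → K) := by
    simp [Module.finrank_pi]
  let bs := basisOfLinearIndependentOfCardEqFinrank hli hcard
  have hbs : ∀ i, bs i = ![v, w] i := fun i => by
    simp only [bs, coe_basisOfLinearIndependentOfCardEqFinrank]
  set α := bs.repr t 0 with hα
  set β := bs.repr t 1 with hβ
  have ht' : t = α • v + β • w := by
    have h0 := bs.sum_repr t
    rw [Fin.sum_univ_two, hbs 0, hbs 1] at h0
    simpa using h0.symm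
  have hβne : β ≠ 0 := by
    intro h1
    apply hxz
    exact ((Projectivization.mk_eq_mk_iff' K t v ht hv).mpr
      ⟨α, by rw [ht', h1]; simp⟩).symm
  have hαne : α ≠ 0 := by
    intro h0
    apply hyz
    exact ((Projectivization.mk_eq_mk_iff' K t w ht hw).mpr
      ⟨β, by rw [ht', h0]; simp⟩).symm
  have hexp : (α * a - (c : K) * α) • v + (β * b - (c : K) * β) • w = 0 := by
    have h1 : (A : Matrix (Fin 2) (Fin 2) K).mulVec t
        = (α * (a : K)) • v + (β * (b : K)) • w := by
      rw [ht', Matrix.mulVec_add, Matrix.mulVec_smul, Matrix.mulVec_smul, ha, hb,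
        smul_smul, smul_smul]
    have h2 : (A : Matrix (Fin 2) (Fin 2) K).mulVec t
        = ((c : K) * α) • v + ((c : K) * β) • w := by
      rw [hc, ht', smul_add, smul_smul, smul_smul]
    have h3 := h1.symm.trans h2
    linear_combination (norm := module) h3
  obtain ⟨e1, e2⟩ := LinearIndependent.pair_iff.mp hli _ _ hexp
  have hac : (a : K) = (c : K) := by
    have h3 : α * ((a : K) - (c : K)) = 0 := by linear_combination e1
    rcases mul_eq_zero.mp h3 with h | h
    · exact absurd h hαne
    · exact sub_eq_zero.mp h
  have hbc : (b : K) = (c : K) := by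
    have h3 : β * ((b : K) - (c : K)) = 0 := by linear_combination e2
    rcases mul_eq_zero.mp h3 with h | h
    · exact absurd h hβne
    · exact sub_eq_zero.mp h
  have hall : ∀ u : Fin 2 → K, (A : Matrix (Fin 2) (Fin 2) K).mulVec u = (c : K) • u := by
    have hmap : (A : Matrix (Fin 2) (Fin 2) K).mulVecLin
        = (c : K) • (LinearMap.id : (Fin 2 → K) →ₗ[K] (Fin 2 → K)) := by
      apply bs.ext
      intro i
      simp only [Matrix.mulVecLin_apply, LinearMap.smul_apply, LinearMap.id_apply, hbs i]
      fin_cases i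
      · show (A : Matrix (Fin 2) (Fin 2) K).mulVec v = (c : K) • v
        rw [ha, hac]
      · show (A : Matrix (Fin 2) (Fin 2) K).mulVec w = (c : K) • w
        rw [hb, hbc]
    intro u
    have := LinearMap.congr_fun hmap u
    simpa [Matrix.mulVecLin_apply] using this
  refine ⟨c, ?_⟩
  ext i j
  have h5 := congrFun (hall (Pi.single j 1)) i
  simp only [Matrix.mulVec_single, mul_one, Pi.smul_apply, Pi.single_apply,
    smul_eq_mul, op_smul_eq_mul, Matrix.col_apply] at h5
  rw [Matrix.smul_apply, Matrix.one_apply, h5]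
  by_cases hij : i = j <;> simp [hij]

lemma cayley_hamilton_fin_two (M : Matrix (Fin 2) (Fin 2) K) :
    M * M = (Matrix.trace M) • M - (M.det) • (1 : Matrix (Fin 2) (Fin 2) K) := by
  ext i j
  fin_cases i <;> fin_cases j <;>
    simp [Matrix.mul_apply, Fin.sum_univ_two, Matrix.trace_fin_two, Matrix.det_fin_two,
      Matrix.one_apply] <;> ring

lemma det_smul_one_fin_two (c : K) :
    ((c • (1 : Matrix (Fin 2) (Fin 2) K)).det) = c * c := by
  rw [Matrix.det_smul, Matrix.det_one, mul_one]
  norm_num [sq]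

lemma sq_det_mem_PSL2 (A : GL (Fin 2) K)
    (h : IsSquare ((A : Matrix (Fin 2) (Fin 2) K).det)) :
    (QuotientGroup.mk A : PGL2 K) ∈ PSL2 K := by
  obtain ⟨r, hr⟩ := h
  have hdet : ((A : Matrix (Fin 2) (Fin 2) K).det) ≠ 0 := by
    have h9 := congrArg Matrix.det (Units.mul_inv A)
    rw [Matrix.det_mul, Matrix.det_one] at h9
    exact left_ne_zero_of_mul_eq_one h9
  have hr0 : r ≠ 0 := by
    intro h0
    rw [h0, mul_zero] at hr
    exact hdet hr
  have hC1 : (r • (1 : Matrix (Fin 2) (Fin 2) K)) * (r⁻¹ • 1) = 1 := by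
    rw [smul_mul_smul_comm, mul_one, mul_inv_cancel₀ hr0, one_smul]
  have hC2 : (r⁻¹ • (1 : Matrix (Fin 2) (Fin 2) K)) * (r • 1) = 1 := by
    rw [smul_mul_smul_comm, mul_one, inv_mul_cancel₀ hr0, one_smul]
  let C : GL (Fin 2) K := ⟨r • 1, r⁻¹ • 1, hC1, hC2⟩
  have hCc : C ∈ Subgroup.center (GL (Fin 2) K) := by
    rw [Subgroup.mem_center_iff]
    intro g
    apply Units.ext
    show (g : Matrix (Fin 2) (Fin 2) K) * (r • 1) = (r • 1) * (g : Matrix (Fin 2) (Fin 2) K)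
    rw [Matrix.mul_smul, Matrix.smul_mul, mul_one, one_mul]
  have hdetB : ((((C⁻¹ * A) : GL (Fin 2) K)) : Matrix (Fin 2) (Fin 2) K).det = 1 := by
    have h6 : (((C⁻¹ * A) : GL (Fin 2) K) : Matrix (Fin 2) (Fin 2) K)
        = (r⁻¹ • 1) * (A : Matrix (Fin 2) (Fin 2) K) := rfl
    rw [h6, Matrix.det_mul, det_smul_one_fin_two, hr]
    field_simp
  refine ⟨⟨(((C⁻¹ * A) : GL (Fin 2) K) : Matrix (Fin 2) (Fin 2) K), hdetB⟩, ?_⟩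
  show QuotientGroup.mk (Matrix.SpecialLinearGroup.toGL _) = QuotientGroup.mk A
  have htoGL : (Matrix.SpecialLinearGroup.toGL
      (⟨(((C⁻¹ * A) : GL (Fin 2) K) : Matrix (Fin 2) (Fin 2) K), hdetB⟩ :
        Matrix.SpecialLinearGroup (Fin 2) K)) = C⁻¹ * A := by
    apply Units.ext
    rfl
  rw [htoGL, QuotientGroup.eq]
  have hcomm : A * C = C * A := Subgroup.mem_center_iff.mp hCc A
  have hkey : (C⁻¹ * A)⁻¹ * A = C := by
    rw [mul_inv_rev, inv_inv, mul_assoc, ← hcomm, ← mul_assoc, inv_mul_cancel, one_mul]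
  rw [hkey]
  exact hCc

lemma isSquare_det_of_swap (A : GL (Fin 2) K) (hK : IsSquare (-1 : K))
    {x y z : Proj K} (hxy : x ≠ y) (hxz : x ≠ z) (hyz : y ≠ z)
    (hx : A • x = y) (hy : A • y = x) (hz : A • z = z) :
    IsSquare ((A : Matrix (Fin 2) (Fin 2) K).det) := by
  have h2x : (A * A) • x = x := by rw [mul_smul, hx, hy]
  have h2y : (A * A) • y = y := by rw [mul_smul, hy, hx]
  have h2z : (A * A) • z = z := by rw [mul_smul, hz, hz]
  obtain ⟨s, hs⟩ := scalar_of_fix3 (A * A) hxy hxz hyz h2x h2y h2z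
  rw [Units.val_mul] at hs
  induction z using Projectivization.ind with | h t ht =>
  obtain ⟨μ, hμ⟩ := exists_unit_of_smul_fix A ht hz
  have hsμ : (s : K) = (μ : K) * μ := by
    have hcalc : (s : K) • t = ((μ : K) * μ) • t := by
      have e1 : ((A : Matrix (Fin 2) (Fin 2) K) * A).mulVec t = ((μ : K) * μ) • t := by
        rw [← Matrix.mulVec_mulVec, hμ, Matrix.mulVec_smul, hμ, smul_smul]
      rw [← e1, hs, Matrix.smul_mulVec, Matrix.one_mulVec]
    obtain ⟨i, hi⟩ := Function.ne_iff.mp ht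
    have := congrFun hcalc i
    simp only [Pi.smul_apply, smul_eq_mul] at this
    exact mul_right_cancel₀ (by simpa using hi) this
  have hCH := cayley_hamilton_fin_two (A : Matrix (Fin 2) (Fin 2) K)
  rw [hs] at hCH
  have hkey : (Matrix.trace (A : Matrix (Fin 2) (Fin 2) K)) • (A : Matrix (Fin 2) (Fin 2) K)
      = ((s : K) + (A : Matrix (Fin 2) (Fin 2) K).det) • 1 := by
    rw [add_smul]
    rw [eq_sub_iff_add_eq] at hCH
    exact hCH.symm
  by_cases htr : Matrix.trace (A : Matrix (Fin 2) (Fin 2) K) = 0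
  · have hz0 : (s : K) + (A : Matrix (Fin 2) (Fin 2) K).det = 0 := by
      have := congrFun (congrFun hkey 0) 0
      simp only [htr, Matrix.smul_apply, Matrix.one_apply_eq, smul_eq_mul, mul_one,
        zero_smul, Matrix.zero_apply, zero_mul] at this
      first
      | exact this.symm
      | exact this
      | linear_combination this
      | linear_combination -this
    obtain ⟨i₀, hi₀⟩ := hK
    refine ⟨i₀ * μ, ?_⟩
    have : (A : Matrix (Fin 2) (Fin 2) K).det = -(s : K) := by linear_combination hz0
    rw [this, hsμ]
    rw [show i₀ * (μ:K) * (i₀ * μ) = (i₀ * i₀) * ((μ:K) * μ) by ring, ← hi₀]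
    ring
  · have hA : (A : Matrix (Fin 2) (Fin 2) K)
        = ((Matrix.trace (A : Matrix (Fin 2) (Fin 2) K))⁻¹
          * ((s : K) + (A : Matrix (Fin 2) (Fin 2) K).det)) • 1 := by
      rw [mul_smul, ← hkey, smul_smul, inv_mul_cancel₀ htr, one_smul]
    refine ⟨(Matrix.trace (A : Matrix (Fin 2) (Fin 2) K))⁻¹
        * ((s : K) + (A : Matrix (Fin 2) (Fin 2) K).det), ?_⟩
    conv_lhs => rw [hA]
    rw [det_smul_one_fin_two]

lemma isSquare_det_of_cycle (A : GL (Fin 2) K)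
    {x y z : Proj K} (hxy : x ≠ y) (hxz : x ≠ z) (hyz : y ≠ z)
    (hx : A • x = y) (hy : A • y = z) (hz : A • z = x) :
    IsSquare ((A : Matrix (Fin 2) (Fin 2) K).det) := by
  have h3x : (A * A * A) • x = x := by rw [mul_smul, mul_smul, hx, hy, hz]
  have h3y : (A * A * A) • y = y := by rw [mul_smul, mul_smul, hy, hz, hx]
  have h3z : (A * A * A) • z = z := by rw [mul_smul, mul_smul, hz, hx, hy]
  obtain ⟨s, hs⟩ := scalar_of_fix3 (A * A * A) hxy hxz hyz h3x h3y h3z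
  rw [Units.val_mul, Units.val_mul] at hs
  set d := (A : Matrix (Fin 2) (Fin 2) K).det with hd
  have hd0 : d ≠ 0 := by
    have h9 := congrArg Matrix.det (Units.mul_inv A)
    rw [Matrix.det_mul, Matrix.det_one] at h9
    exact left_ne_zero_of_mul_eq_one h9
  have hd3 : d * d * d = (s : K) * s := by
    have := congrArg Matrix.det hs
    rw [Matrix.det_mul, Matrix.det_mul, det_smul_one_fin_two] at this
    exact this
  refine ⟨(s : K) * d⁻¹, ?_⟩
  field_simp
  linear_combination hd3

lemma isSquare_det_of_mapsTo (hK : IsSquare (-1 : K)) (A : GL (Fin 2) K)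
    {x y z : Proj K} (hxy : x ≠ y) (hxz : x ≠ z) (hyz : y ≠ z)
    (hx : A • x ∈ ({x, y, z} : Set (Proj K)))
    (hy : A • y ∈ ({x, y, z} : Set (Proj K)))
    (hz : A • z ∈ ({x, y, z} : Set (Proj K))) :
    IsSquare ((A : Matrix (Fin 2) (Fin 2) K).det) := by
  have inj : Function.Injective (fun w : Proj K => A • w) := MulAction.injective A
  simp only [Set.mem_insert_iff, Set.mem_singleton_iff] at hx hy hz
  rcases hx with hx | hx | hx <;> rcases hy with hy | hy | hy <;> rcases hz with hz | hz | hz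
  all_goals try exact absurd (inj (hx.trans hy.symm)) hxy
  all_goals try exact absurd (inj (hx.trans hz.symm)) hxz
  all_goals try exact absurd (inj (hy.trans hz.symm)) hyz
  · obtain ⟨s, hs⟩ := scalar_of_fix3 A hxy hxz hyz hx hy hz
    exact ⟨s, by rw [hs, det_smul_one_fin_two]⟩
  · exact isSquare_det_of_swap A hK hyz hxy.symm hxz.symm hy hz hx
  · exact isSquare_det_of_swap A hK hxy hxz hyz hx hy hz
  · exact isSquare_det_of_cycle A hxy hxz hyz hx hy hz
  · exact isSquare_det_of_cycle A hxz hxy hyz.symm hx hz hy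
  · exact isSquare_det_of_swap A hK hxz hxy hyz.symm hx hz hy

end AuxProof

/-- Let `q` be an odd prime power with `q ≡ 1 (mod 4)`. Any intersecting subset
of `PGL(2, F_q)` for the action on 3-element subsets of the projective line lies in a single
coset of `PSL(2, F_q)`. -/
theorem intersecting_subset_in_coset_of_psl (p m : ℕ) [Fact p.Prime] (hp : Odd p) (hm : 1 ≤ m)
    (hq : p ^ m % 4 = 1) (F : Set (PGL2 (GaloisField p m)))
    (hF : IntersectingOnSubsets _ (GaloisField p m) 3 F) :
    ∀ g ∈ F, ∀ h ∈ F, g * h⁻¹ ∈ PSL2 (GaloisField p m) := by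
  intro g hg h hh
  obtain ⟨S, hS3, hgh⟩ := hF g hg h hh
  obtain ⟨x, y, z, hxy, hxz, hyz, rfl⟩ := Set.ncard_eq_three.mp hS3
  haveI : Fintype (GaloisField p m) := Fintype.ofFinite _
  have hK : IsSquare (-1 : GaloisField p m) := by
    rw [FiniteField.isSquare_neg_one_iff, ← Nat.card_eq_fintype_card,
      GaloisField.card p m (by omega), hq]
    omega
  obtain ⟨GA, hGA⟩ := QuotientGroup.mk_surjective g
  obtain ⟨GB, hGB⟩ := QuotientGroup.mk_surjective h
  set C : GL (Fin 2) (GaloisField p m) := GB⁻¹ * GA with hC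
  have hmkC : (QuotientGroup.mk C : PGL2 (GaloisField p m)) = h⁻¹ * g := by
    rw [← hGA, ← hGB]; rfl
  have hu : (h⁻¹ * g) • ({x, y, z} : Set (Proj (GaloisField p m))) = {x, y, z} := by
    rw [mul_smul, hgh, inv_smul_smul]
  have hmem : ∀ w ∈ ({x, y, z} : Set (Proj (GaloisField p m))),
      C • w ∈ ({x, y, z} : Set (Proj (GaloisField p m))) := by
    intro w hw
    have h1 : (h⁻¹ * g) • w ∈ (h⁻¹ * g) • ({x, y, z} : Set (Proj (GaloisField p m))) :=
      Set.smul_mem_smul_set hw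
    rw [hu] at h1
    have h2 : (h⁻¹ * g) • w = C • w := by rw [← hmkC, PGL2_smul_mk']
    rwa [h2] at h1
  have hsq : IsSquare ((C : Matrix (Fin 2) (Fin 2) (GaloisField p m)).det) :=
    isSquare_det_of_mapsTo hK C hxy hxz hyz (hmem x (by simp)) (hmem y (by simp))
      (hmem z (by simp))
  have hgoal : g * h⁻¹ = (QuotientGroup.mk (GA * GB⁻¹) : PGL2 (GaloisField p m)) := by
    rw [← hGA, ← hGB]; rfl
  rw [hgoal]
  apply sq_det_mem_PSL2
  have hdeq : (((GA * GB⁻¹ : GL (Fin 2) (GaloisField p m))) :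
        Matrix (Fin 2) (Fin 2) (GaloisField p m)).det
      = ((C : Matrix (Fin 2) (Fin 2) (GaloisField p m))).det := by
    rw [hC, Units.val_mul, Units.val_mul, Matrix.det_mul, Matrix.det_mul, mul_comm]
  rwa [hdeq]
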